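/- Let κ > 0, u₀ > 0, and let (u,v) solve u' = v/√(1+v²), v' = κu on ℝ with u(0) = u₀, v(0) = 0. Then u is strictly convex on ℝ (u''(r) > 0 for all r), u(r) → ∞ as r → ∞, u'(r) → 1 as r → ∞, and u''(r) → 0 as r → ∞. -/

import Mathlib

open Filter Topology

/-- Sessile case: convexity and asymptotics. -/
theorem stmt_7 (κ u₀ : ℝ) (hκ : 0 < κ) (hu₀ : 0 < u₀) (u v : ℝ → ℝ)
    (hu : ∀ r : ℝ, HasDerivAt u (v r / Real.sqrt (1 + v r ^ 2)) r)
    (hv : ∀ r : ℝ, HasDerivAt v (κ * u r) r)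
    (hu0 : u 0 = u₀) (hv0 : v 0 = 0) :
    (∀ r : ℝ, 0 < κ * u r / Real.sqrt (1 + v r ^ 2) ^ 3) ∧
    StrictConvexOn ℝ Set.univ u ∧
    Tendsto u atTop atTop ∧
    Tendsto (fun r => v r / Real.sqrt (1 + v r ^ 2)) atTop (𝓝 1) ∧
    Tendsto (fun r => κ * u r / Real.sqrt (1 + v r ^ 2) ^ 3) atTop (𝓝 0) := by
  set s : ℝ → ℝ := fun r => Real.sqrt (1 + v r ^ 2) with hs_def
  have h1v : ∀ r, (0:ℝ) < 1 + v r ^ 2 := fun r => by positivity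
  have hspos : ∀ r, 0 < s r := fun r => Real.sqrt_pos.2 (h1v r)
  have hs_sq : ∀ r, s r ^ 2 = 1 + v r ^ 2 := fun r => Real.sq_sqrt (h1v r).le
  have hs1 : ∀ r, 1 ≤ s r := fun r => by
    nlinarith [hs_sq r, hspos r, sq_nonneg (v r)]
  have hucont : Continuous u :=
    Differentiable.continuous (fun r => (hu r).differentiableAt)
  -- derivative of s
  have hsd : ∀ r, HasDerivAt s (v r * (κ * u r) / s r) r := by
    intro r
    have h1 : HasDerivAt (fun r => 1 + v r ^ 2) (2 * v r ^ 1 * (κ * u r)) r :=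
      ((hv r).pow 2).const_add 1
    have h2 := h1.sqrt (ne_of_gt (h1v r))
    have heq : v r * (κ * u r) / s r
        = 2 * v r ^ 1 * (κ * u r) / (2 * Real.sqrt (1 + v r ^ 2)) := by
      show v r * (κ * u r) / Real.sqrt (1 + v r ^ 2) = _
      ring
    rw [hs_def, heq]
    exact h2
  -- second derivative of u
  have hd2 : ∀ r, HasDerivAt (fun r => v r / s r) (κ * u r / s r ^ 3) r := by
    intro r
    have h := (hv r).div (hsd r) (ne_of_gt (hspos r))
    refine h.congr_deriv (Eq.symm ?_)
    have hne := (hspos r).ne'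
    field_simp
    linear_combination (-(u r)) * hs_sq r
  -- first integral
  have key : ∀ r, s r = κ * (u r ^ 2 - u₀ ^ 2) / 2 + 1 := by
    have hE : ∀ x, HasDerivAt (fun r => κ * u r ^ 2 / 2 - s r) 0 x := by
      intro x
      have h1 : HasDerivAt (fun r => κ * u r ^ 2 / 2)
          (κ * (2 * u x ^ 1 * (v x / s x)) / 2) x := (((hu x).pow 2).const_mul κ).div_const 2
      have h2 := h1.sub (hsd x)
      refine h2.congr_deriv (Eq.symm ?_)
      have hne := (hspos x).ne'
      field_simp
      ring
    have hconst : ∀ x : ℝ, (κ * u x ^ 2 / 2 - s x) = (κ * u 0 ^ 2 / 2 - s 0) := by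
      intro x
      exact is_const_of_deriv_eq_zero (fun y => (hE y).differentiableAt)
        (fun y => (hE y).deriv) x 0
    intro r
    have h0 : s 0 = 1 := by rw [hs_def]; simp [hv0]
    have := hconst r
    rw [h0, hu0] at this
    linarith
  -- u is positive everywhere
  have hu2 : ∀ r, u₀ ^ 2 ≤ u r ^ 2 := by
    intro r
    have h1 := hs1 r
    rw [key r] at h1
    nlinarith
  have upos : ∀ r, 0 < u r := by
    intro r
    by_contra h
    push_neg at h
    have h0 : (0:ℝ) ∈ Set.uIcc (u r) (u 0) := by
      rw [hu0]
      exact Set.mem_uIcc.2 (Or.inl ⟨h, hu₀.le⟩)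
    obtain ⟨c, _, hc⟩ := intermediate_value_uIcc (hucont.continuousOn (s := Set.uIcc r 0)) h0
    have := hu2 c
    rw [hc] at this
    nlinarith
  -- part 1
  have part1 : ∀ r : ℝ, 0 < κ * u r / s r ^ 3 := fun r =>
    div_pos (mul_pos hκ (upos r)) (pow_pos (hspos r) 3)
  -- strict convexity
  have conv : StrictConvexOn ℝ Set.univ u := by
    apply strictConvexOn_of_deriv2_pos convex_univ hucont.continuousOn
    intro x _
    have hdu : deriv u = fun r => v r / s r := funext fun r => (hu r).deriv
    have : deriv^[2] u x = κ * u x / s x ^ 3 := by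
      show deriv (deriv^[1] u) x = _
      rw [Function.iterate_one, hdu]
      exact (hd2 x).deriv
    rw [this]
    exact part1 x
  -- monotonicity of u' and v
  have humono : StrictMono (fun r => v r / s r) :=
    strictMono_of_deriv_pos fun x => by rw [(hd2 x).deriv]; exact part1 x
  have hvmono : StrictMono v :=
    strictMono_of_deriv_pos fun x => by rw [(hv x).deriv]; exact mul_pos hκ (upos x)
  have hu'0 : v 0 / s 0 = 0 := by rw [hv0]; simp
  have hu'1pos : 0 < v 1 / s 1 := by
    have h := humono (show (0:ℝ) < 1 by norm_num)
    simpa [hv0] using h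
  have vpos : ∀ r, 0 < r → 0 < v r := fun r hr => by
    have := hvmono hr; rwa [hv0] at this
  -- u tends to atTop
  have hbound : ∀ r, 1 < r → u 1 + (v 1 / s 1) * (r - 1) ≤ u r := by
    intro r hr
    obtain ⟨c, hc, hceq⟩ := exists_hasDerivAt_eq_slope u (fun x => v x / s x) hr
      hucont.continuousOn (fun x _ => hu x)
    have h1 : v 1 / s 1 ≤ v c / s c := (humono hc.1).le
    rw [hceq] at h1
    have hr1 : (0:ℝ) < r - 1 := by linarith
    rw [le_div_iff₀ hr1] at h1
    linarith
  have hlin : Tendsto (fun r : ℝ => u 1 + (v 1 / s 1) * (r - 1)) atTop atTop := by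
    apply tendsto_atTop_add_const_left
    exact Tendsto.const_mul_atTop hu'1pos (tendsto_atTop_add_const_right atTop (-1) tendsto_id)
  have hu_top : Tendsto u atTop atTop :=
    tendsto_atTop_mono' atTop
      (eventually_atTop.2 ⟨2, fun r hr => hbound r (by linarith)⟩) hlin
  -- s tends to atTop
  have hu2_top : Tendsto (fun r => u r ^ 2) atTop atTop :=
    (tendsto_pow_atTop (two_ne_zero)).comp hu_top
  have hs_top : Tendsto s atTop atTop := by
    have h1 : Tendsto (fun r => κ * (u r ^ 2 - u₀ ^ 2) / 2 + 1) atTop atTop := by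
      apply tendsto_atTop_add_const_right
      apply Tendsto.atTop_div_const (by norm_num : (0:ℝ) < 2)
      exact Tendsto.const_mul_atTop hκ (tendsto_atTop_add_const_right atTop _ hu2_top)
    exact h1.congr fun r => (key r).symm
  have hvsq_top : Tendsto (fun r => 1 + v r ^ 2) atTop atTop := by
    have : Tendsto (fun r => s r ^ 2) atTop atTop :=
      (tendsto_pow_atTop (two_ne_zero)).comp hs_top
    exact this.congr fun r => hs_sq r
  -- u' → 1
  have hA : Tendsto (fun r => 1 - 1 / (1 + v r ^ 2)) atTop (𝓝 1) := by
    have h1 : Tendsto (fun r => (1 + v r ^ 2)⁻¹) atTop (𝓝 0) :=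
      hvsq_top.inv_tendsto_atTop
    have h2 : Tendsto (fun r => 1 - (1 + v r ^ 2)⁻¹) atTop (𝓝 (1 - 0)) :=
      Tendsto.sub tendsto_const_nhds h1
    simpa [one_div] using h2
  have hsqrt : Tendsto (fun r => Real.sqrt (1 - 1 / (1 + v r ^ 2))) atTop (𝓝 1) := by
    have := (Real.continuous_sqrt.tendsto 1).comp hA
    simpa [Function.comp_def] using this
  have heq : ∀ᶠ r in atTop, Real.sqrt (1 - 1 / (1 + v r ^ 2)) = v r / s r := by
    filter_upwards [eventually_gt_atTop (0:ℝ)] with r hr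
    have hvr := vpos r hr
    have h1 : 1 - 1 / (1 + v r ^ 2) = v r ^ 2 / (1 + v r ^ 2) := by
      field_simp
      ring
    rw [hs_def, h1, Real.sqrt_div (sq_nonneg _), Real.sqrt_sq hvr.le]
  have tendu' : Tendsto (fun r => v r / s r) atTop (𝓝 1) := hsqrt.congr' heq
  -- u'' → 0
  have h4u : Tendsto (fun r => 4 / u r) atTop (𝓝 0) := by
    have := hu_top.inv_tendsto_atTop
    have h2 := this.const_mul (4:ℝ)
    simpa [div_eq_mul_inv] using h2
  have hub : ∀ᶠ r in atTop, κ * u r / s r ^ 3 ≤ 4 / u r := by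
    filter_upwards [hu_top.eventually_ge_atTop (2 * u₀)] with r hr
    have h1 : 2 * u₀ ^ 2 ≤ u r ^ 2 := by nlinarith [upos r]
    have hs4 : κ * u r ^ 2 / 4 ≤ s r := by
      rw [key r]
      nlinarith
    have hs1r := hs1 r
    have hs3 : s r ≤ s r ^ 3 := by
      have h1 := hs1 r
      have h2 := hspos r
      nlinarith [mul_nonneg (mul_nonneg h2.le h2.le) (by linarith : (0:ℝ) ≤ s r - 1),
        mul_nonneg h2.le (by linarith : (0:ℝ) ≤ s r - 1)]
    rw [div_le_div_iff₀ (pow_pos (hspos r) 3) (upos r)]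
    nlinarith [hs3, hs4]
  have tendu'' : Tendsto (fun r => κ * u r / s r ^ 3) atTop (𝓝 0) :=
    tendsto_of_tendsto_of_tendsto_of_le_of_le' tendsto_const_nhds h4u
      (Eventually.of_forall fun r => (part1 r).le) hub
  exact ⟨part1, conv, hu_top, tendu', tendu''⟩
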